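/- Let H be a Hopf algebra over a field k with bijective antipode S, and let λ : H → k be a nonzero left integral for H in H⁎. Assume the map H → H⁎, h ↦ λ ↼ h, is injective, and let χ : H → H be a bijective algebra homomorphism satisfying λ(x·h) = λ(χ(h)·x) for all x, h ∈ H. Set α := ε ∘ χ. Then the following are equivalent: (i) S² = id_H and α = ε; (ii) λ is cocommutative, i.e. λ(x·y) = λ(y·x) for all x, y ∈ H. -/

import Mathlib

/-!
Helper definitions for Sweedler-notation expressions in a Hopf algebra `H` over a field `k`.
-/

open TensorProduct

variable {k H : Type*} [Field k] [Ring H] [HopfAlgebra k H]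

/-- `swl f h = f(h₁) • h₂` in Sweedler notation. -/
noncomputable def swl (f : H →ₗ[k] k) : H →ₗ[k] H :=
  (TensorProduct.lid k H).toLinearMap ∘ₗ (f.rTensor H) ∘ₗ Coalgebra.comul

/-- `swr f h = f(h₂) • h₁` in Sweedler notation. -/
noncomputable def swr (f : H →ₗ[k] k) : H →ₗ[k] H :=
  (TensorProduct.rid k H).toLinearMap ∘ₗ (f.lTensor H) ∘ₗ Coalgebra.comul

/-- `sw2 f g h = f(h₁) * g(h₂)`, an element of `H`, in Sweedler notation. -/
noncomputable def sw2 (f g : H →ₗ[k] H) : H →ₗ[k] H :=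
  (LinearMap.mul' k H) ∘ₗ (TensorProduct.map f g) ∘ₗ Coalgebra.comul

/-- `sw2k f g h = f(h₁) * g(h₂)`, a scalar, in Sweedler notation. -/
noncomputable def sw2k (f g : H →ₗ[k] k) : H →ₗ[k] k :=
  (LinearMap.mul' k k) ∘ₗ (TensorProduct.map f g) ∘ₗ Coalgebra.comul

/-- `comul3 h = (h₁ ⊗ h₂) ⊗ h₃`, the iterated comultiplication `(Δ ⊗ id)Δ`. -/
noncomputable def comul3 : H →ₗ[k] (H ⊗[k] H) ⊗[k] H :=
  (LinearMap.rTensor H Coalgebra.comul) ∘ₗ Coalgebra.comul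

/-- `sw3 f g e h = f(h₁) * g(h₂) * e(h₃)`, an element of `H`, in Sweedler notation. -/
noncomputable def sw3 (f g e : H →ₗ[k] H) : H →ₗ[k] H :=
  (LinearMap.mul' k H) ∘ₗ
    (TensorProduct.map ((LinearMap.mul' k H) ∘ₗ TensorProduct.map f g) e) ∘ₗ comul3

/-! ### Auxiliary lemmas for Statement 7 -/

namespace Statement7Aux

open Coalgebra HopfAlgebra

local notation "𝒮" => HopfAlgebra.antipode (R := k) (A := H)

/-- `∑ ε(a₂) • a₁ = a`. -/
lemma sum_counit_right_smul_left (a : H) {ι : Type*} (r : Coalgebra.Repr k a ι) :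
    ∑ i ∈ r.index, Coalgebra.counit (R := k) (r.right i) • r.left i = a := by
  have h := Coalgebra.sum_tmul_counit_eq r
  have h2 := congrArg (TensorProduct.rid k H) h
  rw [map_sum] at h2
  simp only [TensorProduct.rid_tmul, one_smul] at h2
  exact h2

/-- `∑ ε(a₁) • a₂ = a`. -/
lemma sum_counit_left_smul_right (a : H) {ι : Type*} (r : Coalgebra.Repr k a ι) :
    ∑ i ∈ r.index, Coalgebra.counit (R := k) (r.left i) • r.right i = a := by
  have h := Coalgebra.sum_counit_tmul_eq r
  have h2 := congrArg (TensorProduct.lid k H) h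
  rw [map_sum] at h2
  simp only [TensorProduct.lid_tmul, one_smul] at h2
  exact h2

/-- `∑ S(a₁) a₂ ⊗ a₃ = 1 ⊗ a`. -/
lemma tensor1 (a : H) {ι κ : Type*} (ra : Coalgebra.Repr k a ι)
    (rv : ∀ i : ι, Coalgebra.Repr k (ra.right i) κ) :
    ∑ i ∈ ra.index, ∑ m ∈ (rv i).index,
        ((𝒮 (ra.left i)) * (rv i).left m) ⊗ₜ[k] (rv i).right m = (1 : H) ⊗ₜ[k] a := by
  classical
  set G : H ⊗[k] (H ⊗[k] H) →ₗ[k] H ⊗[k] H :=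
    (LinearMap.rTensor H ((LinearMap.mul' k H) ∘ₗ (LinearMap.rTensor H 𝒮))) ∘ₗ
      (TensorProduct.assoc k H H H).symm.toLinearMap with hG
  have hGapp : ∀ x y z : H, G (x ⊗ₜ[k] (y ⊗ₜ[k] z)) = ((𝒮 x) * y) ⊗ₜ[k] z := by
    intro x y z
    simp [hG]
  have h := Coalgebra.sum_tmul_tmul_eq ra (fun i => Coalgebra.Repr.arbitrary k (ra.left i)) rv
  have h2 := congrArg G h
  rw [map_sum, map_sum] at h2
  simp only [map_sum, hGapp] at h2
  -- h2 : ∑ i, ∑ j, (S l * r) ⊗ (ra.right i) = ∑ i, ∑ m, (S (ra.left i) * c) ⊗ d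
  rw [← h2]
  have : ∀ i ∈ ra.index,
      ∑ j ∈ (Coalgebra.Repr.arbitrary k (ra.left i)).index,
        ((𝒮 ((Coalgebra.Repr.arbitrary k (ra.left i)).left j)) *
          (Coalgebra.Repr.arbitrary k (ra.left i)).right j) ⊗ₜ[k] ra.right i
        = Coalgebra.counit (R := k) (ra.left i) • ((1 : H) ⊗ₜ[k] ra.right i) := by
    intro i _
    rw [← TensorProduct.sum_tmul, HopfAlgebra.sum_antipode_mul_eq_smul, TensorProduct.smul_tmul']
  rw [Finset.sum_congr rfl this]
  have : ∑ i ∈ ra.index, Coalgebra.counit (R := k) (ra.left i) • ((1 : H) ⊗ₜ[k] ra.right i)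
      = (1 : H) ⊗ₜ[k] ∑ i ∈ ra.index, Coalgebra.counit (R := k) (ra.left i) • ra.right i := by
    rw [TensorProduct.tmul_sum]
    exact Finset.sum_congr rfl fun i _ => by rw [TensorProduct.tmul_smul]
  rw [this, sum_counit_left_smul_right a ra]

variable (lam : H →ₗ[k] k)

/-- Expansion of the integral property at a product. -/
lemma integral_mul (hlaml : ∀ h : H, swr lam h = lam h • (1 : H)) (v b : H)
    {ι κ : Type*} (rv : Coalgebra.Repr k v ι) (rb : Coalgebra.Repr k b κ) :
    lam (v * b) • (1 : H) =
      ∑ m ∈ rv.index, ∑ j ∈ rb.index,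
        lam (rv.right m * rb.right j) • (rv.left m * rb.left j) := by
  rw [← hlaml (v * b)]
  have hcm : Coalgebra.comul (R := k) (v * b) =
      ∑ m ∈ rv.index, ∑ j ∈ rb.index,
        (rv.left m * rb.left j) ⊗ₜ[k] (rv.right m * rb.right j) := by
    rw [Bialgebra.comul_mul, ← rv.eq, ← rb.eq, Finset.sum_mul_sum]
    exact Finset.sum_congr rfl fun m _ => Finset.sum_congr rfl fun j _ => by
      rw [Algebra.TensorProduct.tmul_mul_tmul]
  rw [swr, LinearMap.comp_apply, LinearMap.comp_apply, hcm]
  simp [map_sum]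

/-- Key identity `(∗)`: `∑ λ(a b₂) • b₁ = ∑ λ(a₂ b) • S(a₁)`. -/
lemma star (hlaml : ∀ h : H, swr lam h = lam h • (1 : H)) (a b : H)
    {ι κ : Type*} (ra : Coalgebra.Repr k a ι) (rb : Coalgebra.Repr k b κ) :
    ∑ j ∈ rb.index, lam (a * rb.right j) • rb.left j
      = ∑ i ∈ ra.index, lam (ra.right i * b) • (𝒮 (ra.left i)) := by
  classical
  set rv : ∀ i : ι, Coalgebra.Repr k (ra.right i) (H × H) :=
    fun i => Coalgebra.Repr.arbitrary k (ra.right i) with hrv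
  -- the auxiliary linear maps F j
  set F : rb.ι → (H ⊗[k] H →ₗ[k] H) := fun j =>
    (TensorProduct.rid k H).toLinearMap ∘ₗ
      (TensorProduct.map (LinearMap.mulRight k (rb.left j))
        (lam ∘ₗ LinearMap.mulRight k (rb.right j))) with hF
  have hFapp : ∀ (j : rb.ι) (z w : H), F j (z ⊗ₜ[k] w) = lam (w * rb.right j) • (z * rb.left j) := by
    intro j z w
    simp [hF]
  calc
    ∑ j ∈ rb.index, lam (a * rb.right j) • rb.left j
        = ∑ j ∈ rb.index, F j ((1 : H) ⊗ₜ[k] a) := by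
          refine Finset.sum_congr rfl fun j _ => ?_
          rw [hFapp, one_mul]
    _ = ∑ j ∈ rb.index, F j (∑ i ∈ ra.index, ∑ m ∈ (rv i).index,
          ((𝒮 (ra.left i)) * (rv i).left m) ⊗ₜ[k] (rv i).right m) := by
          rw [tensor1 a ra rv]
    _ = ∑ j ∈ rb.index, ∑ i ∈ ra.index, ∑ m ∈ (rv i).index,
          lam ((rv i).right m * rb.right j) • ((𝒮 (ra.left i)) * ((rv i).left m * rb.left j)) := by
          refine Finset.sum_congr rfl fun j _ => ?_
          rw [map_sum]
          refine Finset.sum_congr rfl fun i _ => ?_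
          rw [map_sum]
          refine Finset.sum_congr rfl fun m _ => ?_
          rw [hFapp, mul_assoc]
    _ = ∑ i ∈ ra.index, ∑ m ∈ (rv i).index, ∑ j ∈ rb.index,
          lam ((rv i).right m * rb.right j) • ((𝒮 (ra.left i)) * ((rv i).left m * rb.left j)) := by
          rw [Finset.sum_comm]
          exact Finset.sum_congr rfl fun i _ => Finset.sum_comm
    _ = ∑ i ∈ ra.index, (𝒮 (ra.left i)) * (∑ m ∈ (rv i).index, ∑ j ∈ rb.index,
          lam ((rv i).right m * rb.right j) • ((rv i).left m * rb.left j)) := by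
          refine Finset.sum_congr rfl fun i _ => ?_
          rw [Finset.mul_sum]
          refine Finset.sum_congr rfl fun m _ => ?_
          rw [Finset.mul_sum]
          refine Finset.sum_congr rfl fun j _ => ?_
          rw [mul_smul_comm]
    _ = ∑ i ∈ ra.index, (𝒮 (ra.left i)) * (lam (ra.right i * b) • (1 : H)) := by
          refine Finset.sum_congr rfl fun i _ => ?_
          rw [← integral_mul lam hlaml (ra.right i) b (rv i) rb]
    _ = ∑ i ∈ ra.index, lam (ra.right i * b) • (𝒮 (ra.left i)) := by
          refine Finset.sum_congr rfl fun i _ => ?_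
          rw [mul_smul_comm, mul_one]

/-- The bilinear pairing `Ψ(z ⊗ w)(h) = λ(w h) • z`. -/
noncomputable def Psi (lam : H →ₗ[k] k) : H ⊗[k] H →ₗ[k] (H →ₗ[k] H) :=
  TensorProduct.lift (LinearMap.mk₂ k
    (fun z w => (lam ∘ₗ LinearMap.mulLeft k w).smulRight z)
    (fun z z' w => by ext h; simp)
    (fun c z w => by ext h; simp [smul_comm c])
    (fun z w w' => by ext h; simp [add_mul, add_smul])
    (fun c z w => by ext h; simp [smul_mul_assoc, mul_smul]))

lemma Psi_apply_tmul (lam : H →ₗ[k] k) (z w h : H) :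
    Psi lam (z ⊗ₜ[k] w) h = lam (w * h) • z := by
  simp [Psi]

lemma Psi_eq_zero (hinj : Function.Injective (fun h : H => lam ∘ₗ LinearMap.mulLeft k h))
    (t : H ⊗[k] H) (ht : ∀ h : H, Psi lam t h = 0) : t = 0 := by
  classical
  set b := Module.Basis.ofVectorSpace k H with hb
  set e := (TensorProduct.congr b.repr (LinearEquiv.refl k H)).trans
    (TensorProduct.finsuppScalarLeft k H _) with he
  have key : ∀ (t : H ⊗[k] H) (i) (h : H), b.repr (Psi lam t h) i = lam ((e t) i * h) := by
    intro t i h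
    induction t using TensorProduct.induction_on with
    | zero => simp
    | tmul z w =>
        rw [Psi_apply_tmul]
        have : e (z ⊗ₜ[k] w) i = b.repr z i • w := by
          simp [he, TensorProduct.congr_tmul,
            TensorProduct.finsuppScalarLeft_apply_tmul_apply]
        rw [this, map_smul, smul_mul_assoc, map_smul]
        simp [mul_comm]
    | add x y hx hy => simp [map_add, hx, hy, add_mul]
  have hcomp : ∀ i, (e t) i = 0 := by
    intro i
    have h0 : (fun h : H => lam ∘ₗ LinearMap.mulLeft k h) ((e t) i)
        = (fun h : H => lam ∘ₗ LinearMap.mulLeft k h) 0 := by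
      simp only [LinearMap.mulLeft_zero_eq_zero, LinearMap.comp_zero]
      ext x
      have := key t i x
      rw [ht x] at this
      simpa using this.symm
    exact hinj h0
  have het : e t = 0 := Finsupp.ext hcomp
  simpa using congrArg e.symm het

lemma Psi_injective (hinj : Function.Injective (fun h : H => lam ∘ₗ LinearMap.mulLeft k h)) :
    Function.Injective (Psi (k := k) (H := H) lam) := by
  intro t1 t2 h12
  rw [← sub_eq_zero]
  refine Psi_eq_zero lam hinj _ fun h => ?_
  rw [map_sub]
  simp [h12]

variable {χ : H →ₐ[k] H}

/-- The master identity `(id ⊗ χ)Δ(x) = (S² ⊗ id)Δ(χ x)`. -/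
lemma master (hlaml : ∀ h : H, swr lam h = lam h • (1 : H))
    (hinj : Function.Injective (fun h : H => lam ∘ₗ LinearMap.mulLeft k h))
    (hχ : ∀ x h : H, lam (x * h) = lam (χ h * x)) (x : H) :
    TensorProduct.map LinearMap.id χ.toLinearMap (Coalgebra.comul (R := k) x)
      = TensorProduct.map (𝒮 ∘ₗ 𝒮) LinearMap.id (Coalgebra.comul (R := k) (χ x)) := by
  apply Psi_injective lam hinj
  apply LinearMap.ext
  intro h
  set rx := Coalgebra.Repr.arbitrary k x with hrx
  set rc := Coalgebra.Repr.arbitrary k (χ x) with hrc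
  set rh := Coalgebra.Repr.arbitrary k h with hrh
  have lhs_eq : Psi lam (TensorProduct.map LinearMap.id χ.toLinearMap
      (Coalgebra.comul (R := k) x)) h
      = ∑ i ∈ rx.index, lam (χ (rx.right i) * h) • rx.left i := by
    rw [← rx.eq, map_sum, map_sum]
    simp only [LinearMap.sum_apply]
    exact Finset.sum_congr rfl fun i _ => by
      rw [TensorProduct.map_tmul, Psi_apply_tmul]; rfl
  have rhs_eq : Psi lam (TensorProduct.map (𝒮 ∘ₗ 𝒮) LinearMap.id
      (Coalgebra.comul (R := k) (χ x))) h
      = ∑ i ∈ rc.index, lam (rc.right i * h) • (𝒮 (𝒮 (rc.left i))) := by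
    rw [← rc.eq, map_sum, map_sum]
    simp only [LinearMap.sum_apply]
    exact Finset.sum_congr rfl fun i _ => by
      rw [TensorProduct.map_tmul, Psi_apply_tmul]; rfl
  rw [lhs_eq, rhs_eq]
  calc
    ∑ i ∈ rx.index, lam (χ (rx.right i) * h) • rx.left i
        = ∑ i ∈ rx.index, lam (h * rx.right i) • rx.left i := by
          exact Finset.sum_congr rfl fun i _ => by rw [← hχ h (rx.right i)]
    _ = ∑ i ∈ rh.index, lam (rh.right i * x) • (𝒮 (rh.left i)) := star lam hlaml h x rh rx
    _ = ∑ i ∈ rh.index, lam (χ x * rh.right i) • (𝒮 (rh.left i)) := by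
          exact Finset.sum_congr rfl fun i _ => by rw [hχ (rh.right i) x]
    _ = 𝒮 (∑ j ∈ rh.index, lam (χ x * rh.right j) • rh.left j) := by
          rw [map_sum]
          exact Finset.sum_congr rfl fun i _ => by rw [map_smul]
    _ = 𝒮 (∑ i ∈ rc.index, lam (rc.right i * h) • (𝒮 (rc.left i))) := by
          rw [star lam hlaml (χ x) h rc rh]
    _ = ∑ i ∈ rc.index, lam (rc.right i * h) • (𝒮 (𝒮 (rc.left i))) := by
          rw [map_sum]
          exact Finset.sum_congr rfl fun i _ => by rw [map_smul]

/-- Consequence: `∑ α(x₂) • x₁ = S²(χ x)` where `α = ε ∘ χ`. -/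
lemma master' (hlaml : ∀ h : H, swr lam h = lam h • (1 : H))
    (hinj : Function.Injective (fun h : H => lam ∘ₗ LinearMap.mulLeft k h))
    (hχ : ∀ x h : H, lam (x * h) = lam (χ h * x)) (x : H) :
    ∑ i ∈ (Coalgebra.Repr.arbitrary k x).index,
        Coalgebra.counit (R := k) (χ ((Coalgebra.Repr.arbitrary k x).right i)) •
          (Coalgebra.Repr.arbitrary k x).left i
      = 𝒮 (𝒮 (χ x)) := by
  classical
  have hM := master lam hlaml hinj hχ x
  set rx := Coalgebra.Repr.arbitrary k x with hrx
  set rc := Coalgebra.Repr.arbitrary k (χ x) with hrc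
  set W : H ⊗[k] H →ₗ[k] H :=
    (TensorProduct.rid k H).toLinearMap ∘ₗ
      (LinearMap.lTensor H (Coalgebra.counit (R := k))) with hW
  have hWapp : ∀ z w : H, W (z ⊗ₜ[k] w) = Coalgebra.counit (R := k) w • z := by
    intro z w; simp [hW]
  have h2 := congrArg W hM
  have hL : W (TensorProduct.map LinearMap.id χ.toLinearMap (Coalgebra.comul (R := k) x))
      = ∑ i ∈ rx.index, Coalgebra.counit (R := k) (χ (rx.right i)) • rx.left i := by
    rw [← rx.eq, map_sum, map_sum]
    exact Finset.sum_congr rfl fun i _ => by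
      rw [TensorProduct.map_tmul, hWapp]; rfl
  have hR : W (TensorProduct.map (𝒮 ∘ₗ 𝒮) LinearMap.id (Coalgebra.comul (R := k) (χ x)))
      = 𝒮 (𝒮 (χ x)) := by
    rw [← rc.eq, map_sum, map_sum]
    have : ∀ i ∈ rc.index, W (TensorProduct.map (𝒮 ∘ₗ 𝒮) LinearMap.id
        (rc.left i ⊗ₜ[k] rc.right i))
        = Coalgebra.counit (R := k) (rc.right i) • (𝒮 (𝒮 (rc.left i))) := by
      intro i _
      rw [TensorProduct.map_tmul, hWapp]; rfl
    rw [Finset.sum_congr rfl this]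
    have : ∑ i ∈ rc.index, Coalgebra.counit (R := k) (rc.right i) • (𝒮 (𝒮 (rc.left i)))
        = 𝒮 (𝒮 (∑ i ∈ rc.index, Coalgebra.counit (R := k) (rc.right i) • rc.left i)) := by
      rw [map_sum, map_sum]
      exact Finset.sum_congr rfl fun i _ => by rw [map_smul, map_smul]
    rw [this, sum_counit_right_smul_left (χ x) rc]
  rw [hL, hR] at h2
  exact h2

end Statement7Aux

/-- `H` Hopf algebra over `k` with bijective antipode `S`, `λ ≠ 0` a left
integral for `H` in `H⁎`, `h ↦ λ ↼ h` injective, and `χ` a bijective algebra endomorphism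
with `λ(x·h) = λ(χ(h)·x)`.  With `α := ε ∘ χ`, the following are equivalent:
(i) `S² = id` and `α = ε`;  (ii) `λ` is cocommutative. -/
theorem statement7
    (hS : Function.Bijective ⇑(HopfAlgebra.antipode (R := k) (A := H)))
    (lam : H →ₗ[k] k) (hlam0 : lam ≠ 0)
    (hlaml : ∀ h : H, swr lam h = lam h • (1 : H))
    (hinj : Function.Injective (fun h : H => lam ∘ₗ LinearMap.mulLeft k h))
    (χ : H →ₐ[k] H) (hχbij : Function.Bijective ⇑χ)
    (hχ : ∀ x h : H, lam (x * h) = lam (χ h * x)) :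
    ((∀ h : H, HopfAlgebra.antipode (R := k) (HopfAlgebra.antipode (R := k) h) = h) ∧
      (∀ h : H, Coalgebra.counit (R := k) (χ h) = Coalgebra.counit (R := k) h)) ↔
    (∀ x y : H, lam (x * y) = lam (y * x)) := by
  constructor
  · rintro ⟨hS2, hα⟩ x y
    have hχid : ∀ z : H, χ z = z := by
      intro z
      have hM := Statement7Aux.master' lam hlaml hinj hχ z
      rw [hS2 (χ z)] at hM
      have : ∑ i ∈ (Coalgebra.Repr.arbitrary k z).index,
          Coalgebra.counit (R := k) (χ ((Coalgebra.Repr.arbitrary k z).right i)) •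
            (Coalgebra.Repr.arbitrary k z).left i = z := by
        rw [Finset.sum_congr rfl fun i _ => by
          rw [hα ((Coalgebra.Repr.arbitrary k z).right i)]]
        exact Statement7Aux.sum_counit_right_smul_left z (Coalgebra.Repr.arbitrary k z)
      rw [this] at hM
      exact hM.symm
    rw [hχ x y, hχid y]
  · intro hcc
    have hχid : ∀ z : H, χ z = z := by
      intro z
      refine hinj ?_
      simp only
      ext w
      simp only [LinearMap.comp_apply, LinearMap.mulLeft_apply]
      rw [← hχ w z, hcc w z]
    refine ⟨?_, fun h => by rw [hχid h]⟩
    intro h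
    have hM := Statement7Aux.master' lam hlaml hinj hχ h
    rw [hχid h] at hM
    have : ∑ i ∈ (Coalgebra.Repr.arbitrary k h).index,
        Coalgebra.counit (R := k) (χ ((Coalgebra.Repr.arbitrary k h).right i)) •
          (Coalgebra.Repr.arbitrary k h).left i = h := by
      rw [Finset.sum_congr rfl fun i _ => by
        rw [hχid ((Coalgebra.Repr.arbitrary k h).right i)]]
      exact Statement7Aux.sum_counit_right_smul_left h (Coalgebra.Repr.arbitrary k h)
    rw [this] at hM
    exact hM.symm
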